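/- Let Φ and Ψ be subgroups of O, each an even unimodular full-rank lattice in 𝕆 ≅ ℝ⁸ with respect to ½⟨x,y⟩, such that Φ + Ψ = O and Φ ∩ Ψ = 2O. Then Λ(Φ,Ψ) = {(a,b,c) ∈ O³ : a+b ∈ Φ, b+c ∈ Φ, a+c ∈ Φ, a+b+c ∈ Ψ} is an even unimodular full-rank lattice in 𝕆³ ≅ ℝ²⁴ with respect to ½⟨x,y⟩ containing no vector of norm 2 (hence it has minimal norm 4 and is a Leech lattice). -/

import Mathlib

noncomputable section

open scoped Quaternion

/-- The real octonions, as the Cayley–Dickson double of the quaternions. -/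
abbrev Oct : Type := ℍ[ℝ] × ℍ[ℝ]

namespace Octonion

/-- Octonion multiplication: `(a,b)(c,d) = (ac − d̄b, da + bc̄)`. -/
def omul (x y : Oct) : Oct :=
  (x.1 * y.1 - star y.2 * x.2, y.2 * x.1 + x.2 * star y.1)

/-- Octonion conjugation: `(a,b)‾ = (ā, −b)`. -/
def oconj (x : Oct) : Oct := (star x.1, -x.2)

/-- The octonion norm `N(x) = x x̄`. -/
def oN (x : Oct) : ℝ := Quaternion.normSq x.1 + Quaternion.normSq x.2

/-- The doubled inner product `⟨x,y⟩ = N(x+y) − N(x) − N(y)`. -/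
def oinner (x y : Oct) : ℝ := oN (x + y) - oN x - oN y

/-- The octonion unit. -/
def oone : Oct := (1, 0)

/-- The basic triple. -/
def oi : Oct := ((⟨0,1,0,0⟩ : ℍ[ℝ]), 0)
def oj : Oct := ((⟨0,0,1,0⟩ : ℍ[ℝ]), 0)
def ol : Oct := (0, 1)

/-- The standard basis `i_0, …, i_6` (with `i_∞ = 1`). -/
def e0 : Oct := -(omul (omul oi oj) ol)
def e1 : Oct := omul oi ol
def e2 : Oct := oi
def e3 : Oct := oj
def e4 : Oct := ol
def e5 : Oct := omul oi oj
def e6 : Oct := omul oj ol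

/-- The simple roots `α₁, …, α₈` of the octavian integers. -/
def octBasis : Fin 8 → Oct :=
  ![ (2⁻¹ : ℝ) • (-e1 + e5 + e6 + e0),
     (2⁻¹ : ℝ) • (-e1 - e2 - e4 - e0),
     (2⁻¹ : ℝ) • (e2 + e3 - e5 - e0),
     (2⁻¹ : ℝ) • (e1 - e3 + e4 + e5),
     (2⁻¹ : ℝ) • (-e2 + e3 - e5 + e0),
     (2⁻¹ : ℝ) • (e2 - e4 + e5 - e6),
     (2⁻¹ : ℝ) • (-e1 - e3 + e4 - e5),
     (2⁻¹ : ℝ) • (-oone + e1 - e4 + e6) ]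

/-- The octavian integer ring `O`, as the ℤ-span of `α₁, …, α₈`. -/
def OctInt : Submodule ℤ Oct := Submodule.span ℤ (Set.range octBasis)

/-- The set `2O`. -/
def twoO : Set Oct := (fun x : Oct => x + x) '' (OctInt : Set Oct)

/-- The set `Os = {xs : x ∈ O}`. -/
def Os (s : Oct) : Set Oct := (fun x => omul x s) '' (OctInt : Set Oct)

/-- The set `sO = {sx : x ∈ O}`. -/
def sO (s : Oct) : Set Oct := (fun x => omul s x) '' (OctInt : Set Oct)

/-- The norm on `𝕆³`. -/
def oN3 (p : Oct × Oct × Oct) : ℝ := oN p.1 + oN p.2.1 + oN p.2.2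

/-- The doubled inner product on `𝕆³`. -/
def oinner3 (p q : Oct × Oct × Oct) : ℝ := oN3 (p + q) - oN3 p - oN3 q


/-! ### Coordinate expansions -/

lemma oN_expand (x : Oct) : oN x =
    x.1.re^2 + x.1.imI^2 + x.1.imJ^2 + x.1.imK^2
      + x.2.re^2 + x.2.imI^2 + x.2.imJ^2 + x.2.imK^2 := by
  simp only [oN, Quaternion.normSq_def']; ring

lemma oinner_expand (x y : Oct) : oinner x y =
    2*(x.1.re*y.1.re + x.1.imI*y.1.imI + x.1.imJ*y.1.imJ + x.1.imK*y.1.imK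
     + x.2.re*y.2.re + x.2.imI*y.2.imI + x.2.imJ*y.2.imJ + x.2.imK*y.2.imK) := by
  simp only [oinner, oN, Quaternion.normSq_def', Prod.fst_add, Prod.snd_add,
    Quaternion.re_add, Quaternion.imI_add, Quaternion.imJ_add, Quaternion.imK_add]
  ring

lemma oinner_add_left (x y z : Oct) : oinner (x + y) z = oinner x z + oinner y z := by
  simp only [oinner_expand, Prod.fst_add, Prod.snd_add,
    Quaternion.re_add, Quaternion.imI_add, Quaternion.imJ_add, Quaternion.imK_add]
  ring

lemma oinner_add_right (x y z : Oct) : oinner x (y + z) = oinner x y + oinner x z := by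
  simp only [oinner_expand, Prod.fst_add, Prod.snd_add,
    Quaternion.re_add, Quaternion.imI_add, Quaternion.imJ_add, Quaternion.imK_add]
  ring

lemma oinner_comm (x y : Oct) : oinner x y = oinner y x := by
  simp only [oinner_expand]; ring

lemma oinner_zero_right (x : Oct) : oinner x 0 = 0 := by
  simp [oinner_expand]

lemma oinner_zsmul_left (n : ℤ) (x y : Oct) : oinner (n • x) y = n * oinner x y := by
  rw [oinner_expand, oinner_expand, Prod.smul_fst, Prod.smul_snd]
  simp only [Quaternion.re_smul, Quaternion.imI_smul, Quaternion.imJ_smul,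
    Quaternion.imK_smul]
  simp only [zsmul_eq_mul]
  ring

lemma oinner_self (x : Oct) : oinner x x = 2 * oN x := by
  simp only [oinner_expand, oN_expand]; ring

lemma oN_add (x y : Oct) : oN (x + y) = oN x + oN y + oinner x y := by
  simp only [oinner]; ring

lemma oN_nonneg (x : Oct) : 0 ≤ oN x := by
  simp only [oN_expand]; positivity

lemma oN_eq_zero {x : Oct} (h : oN x = 0) : x = 0 := by
  have hn1 := Quaternion.normSq_nonneg (a := x.1)
  have hn2 := Quaternion.normSq_nonneg (a := x.2)
  have h' : Quaternion.normSq x.1 + Quaternion.normSq x.2 = 0 := h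
  have e1 : Quaternion.normSq x.1 = 0 := by linarith
  have e2 : Quaternion.normSq x.2 = 0 := by linarith
  exact Prod.ext (Quaternion.normSq_eq_zero.mp e1) (Quaternion.normSq_eq_zero.mp e2)

/-- The `E₈` Cartan matrix: the Gram matrix of the simple roots. -/
def gMat : Fin 8 → Fin 8 → ℤ :=
  ![![2,0,-1,0,0,0,0,0],
    ![0,2,0,-1,0,0,0,0],
    ![-1,0,2,-1,0,0,0,0],
    ![0,-1,-1,2,-1,0,0,0],
    ![0,0,0,-1,2,-1,0,0],
    ![0,0,0,0,-1,2,-1,0],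
    ![0,0,0,0,0,-1,2,-1],
    ![0,0,0,0,0,0,-1,2]]


lemma oi_fst_re : oi.1.re = 0 := rfl
lemma oi_fst_imI : oi.1.imI = 1 := rfl
lemma oi_fst_imJ : oi.1.imJ = 0 := rfl
lemma oi_fst_imK : oi.1.imK = 0 := rfl
lemma oj_fst_re : oj.1.re = 0 := rfl
lemma oj_fst_imI : oj.1.imI = 0 := rfl
lemma oj_fst_imJ : oj.1.imJ = 1 := rfl
lemma oj_fst_imK : oj.1.imK = 0 := rfl
lemma oi_snd : oi.2 = 0 := rfl
lemma oj_snd : oj.2 = 0 := rfl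
lemma ol_fst : ol.1 = 0 := rfl
lemma ol_snd : ol.2 = 1 := rfl
lemma oone_fst : oone.1 = 1 := rfl
lemma oone_snd : oone.2 = 0 := rfl

lemma octBasis_0 : octBasis 0 = ((⟨0,0,0,2⁻¹⟩ : ℍ[ℝ]), (⟨0,-2⁻¹,2⁻¹,-2⁻¹⟩ : ℍ[ℝ])) := by
  have h : octBasis 0 = (2⁻¹ : ℝ) • (-e1 + e5 + e6 + e0) := rfl
  rw [h]
  refine Prod.ext ?_ ?_ <;>
  · ext <;>
      simp [e0, e1, e2, e3, e4, e5, e6, oi_fst_re, oi_fst_imI, oi_fst_imJ, oi_fst_imK, oj_fst_re, oj_fst_imI,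
          oj_fst_imJ, oj_fst_imK, oi_snd, oj_snd, ol_fst, ol_snd, oone_fst, oone_snd, omul,
        Quaternion.re_mul, Quaternion.imI_mul, Quaternion.imJ_mul, Quaternion.imK_mul]

lemma octBasis_0' (hk : 0 < 8) : octBasis ⟨0, hk⟩ = ((⟨0,0,0,2⁻¹⟩ : ℍ[ℝ]), (⟨0,-2⁻¹,2⁻¹,-2⁻¹⟩ : ℍ[ℝ])) := octBasis_0

lemma octBasis_1 : octBasis 1 = ((⟨0,-2⁻¹,0,0⟩ : ℍ[ℝ]), (⟨-2⁻¹,-2⁻¹,0,2⁻¹⟩ : ℍ[ℝ])) := by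
  have h : octBasis 1 = (2⁻¹ : ℝ) • (-e1 - e2 - e4 - e0) := rfl
  rw [h]
  refine Prod.ext ?_ ?_ <;>
  · ext <;>
      simp [e0, e1, e2, e3, e4, e5, e6, oi_fst_re, oi_fst_imI, oi_fst_imJ, oi_fst_imK, oj_fst_re, oj_fst_imI,
          oj_fst_imJ, oj_fst_imK, oi_snd, oj_snd, ol_fst, ol_snd, oone_fst, oone_snd, omul,
        Quaternion.re_mul, Quaternion.imI_mul, Quaternion.imJ_mul, Quaternion.imK_mul]

lemma octBasis_1' (hk : 1 < 8) : octBasis ⟨1, hk⟩ = ((⟨0,-2⁻¹,0,0⟩ : ℍ[ℝ]), (⟨-2⁻¹,-2⁻¹,0,2⁻¹⟩ : ℍ[ℝ])) := octBasis_1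

lemma octBasis_2 : octBasis 2 = ((⟨0,2⁻¹,2⁻¹,-2⁻¹⟩ : ℍ[ℝ]), (⟨0,0,0,2⁻¹⟩ : ℍ[ℝ])) := by
  have h : octBasis 2 = (2⁻¹ : ℝ) • (e2 + e3 - e5 - e0) := rfl
  rw [h]
  refine Prod.ext ?_ ?_ <;>
  · ext <;>
      simp [e0, e1, e2, e3, e4, e5, e6, oi_fst_re, oi_fst_imI, oi_fst_imJ, oi_fst_imK, oj_fst_re, oj_fst_imI,
          oj_fst_imJ, oj_fst_imK, oi_snd, oj_snd, ol_fst, ol_snd, oone_fst, oone_snd, omul,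
        Quaternion.re_mul, Quaternion.imI_mul, Quaternion.imJ_mul, Quaternion.imK_mul]

lemma octBasis_2' (hk : 2 < 8) : octBasis ⟨2, hk⟩ = ((⟨0,2⁻¹,2⁻¹,-2⁻¹⟩ : ℍ[ℝ]), (⟨0,0,0,2⁻¹⟩ : ℍ[ℝ])) := octBasis_2

lemma octBasis_3 : octBasis 3 = ((⟨0,0,-2⁻¹,2⁻¹⟩ : ℍ[ℝ]), (⟨2⁻¹,2⁻¹,0,0⟩ : ℍ[ℝ])) := by
  have h : octBasis 3 = (2⁻¹ : ℝ) • (e1 - e3 + e4 + e5) := rfl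
  rw [h]
  refine Prod.ext ?_ ?_ <;>
  · ext <;>
      simp [e0, e1, e2, e3, e4, e5, e6, oi_fst_re, oi_fst_imI, oi_fst_imJ, oi_fst_imK, oj_fst_re, oj_fst_imI,
          oj_fst_imJ, oj_fst_imK, oi_snd, oj_snd, ol_fst, ol_snd, oone_fst, oone_snd, omul,
        Quaternion.re_mul, Quaternion.imI_mul, Quaternion.imJ_mul, Quaternion.imK_mul]

lemma octBasis_3' (hk : 3 < 8) : octBasis ⟨3, hk⟩ = ((⟨0,0,-2⁻¹,2⁻¹⟩ : ℍ[ℝ]), (⟨2⁻¹,2⁻¹,0,0⟩ : ℍ[ℝ])) := octBasis_3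

lemma octBasis_4 : octBasis 4 = ((⟨0,-2⁻¹,2⁻¹,-2⁻¹⟩ : ℍ[ℝ]), (⟨0,0,0,-2⁻¹⟩ : ℍ[ℝ])) := by
  have h : octBasis 4 = (2⁻¹ : ℝ) • (-e2 + e3 - e5 + e0) := rfl
  rw [h]
  refine Prod.ext ?_ ?_ <;>
  · ext <;>
      simp [e0, e1, e2, e3, e4, e5, e6, oi_fst_re, oi_fst_imI, oi_fst_imJ, oi_fst_imK, oj_fst_re, oj_fst_imI,
          oj_fst_imJ, oj_fst_imK, oi_snd, oj_snd, ol_fst, ol_snd, oone_fst, oone_snd, omul,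
        Quaternion.re_mul, Quaternion.imI_mul, Quaternion.imJ_mul, Quaternion.imK_mul]

lemma octBasis_4' (hk : 4 < 8) : octBasis ⟨4, hk⟩ = ((⟨0,-2⁻¹,2⁻¹,-2⁻¹⟩ : ℍ[ℝ]), (⟨0,0,0,-2⁻¹⟩ : ℍ[ℝ])) := octBasis_4

lemma octBasis_5 : octBasis 5 = ((⟨0,2⁻¹,0,2⁻¹⟩ : ℍ[ℝ]), (⟨-2⁻¹,0,-2⁻¹,0⟩ : ℍ[ℝ])) := by
  have h : octBasis 5 = (2⁻¹ : ℝ) • (e2 - e4 + e5 - e6) := rfl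
  rw [h]
  refine Prod.ext ?_ ?_ <;>
  · ext <;>
      simp [e0, e1, e2, e3, e4, e5, e6, oi_fst_re, oi_fst_imI, oi_fst_imJ, oi_fst_imK, oj_fst_re, oj_fst_imI,
          oj_fst_imJ, oj_fst_imK, oi_snd, oj_snd, ol_fst, ol_snd, oone_fst, oone_snd, omul,
        Quaternion.re_mul, Quaternion.imI_mul, Quaternion.imJ_mul, Quaternion.imK_mul]

lemma octBasis_5' (hk : 5 < 8) : octBasis ⟨5, hk⟩ = ((⟨0,2⁻¹,0,2⁻¹⟩ : ℍ[ℝ]), (⟨-2⁻¹,0,-2⁻¹,0⟩ : ℍ[ℝ])) := octBasis_5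

lemma octBasis_6 : octBasis 6 = ((⟨0,0,-2⁻¹,-2⁻¹⟩ : ℍ[ℝ]), (⟨2⁻¹,-2⁻¹,0,0⟩ : ℍ[ℝ])) := by
  have h : octBasis 6 = (2⁻¹ : ℝ) • (-e1 - e3 + e4 - e5) := rfl
  rw [h]
  refine Prod.ext ?_ ?_ <;>
  · ext <;>
      simp [e0, e1, e2, e3, e4, e5, e6, oi_fst_re, oi_fst_imI, oi_fst_imJ, oi_fst_imK, oj_fst_re, oj_fst_imI,
          oj_fst_imJ, oj_fst_imK, oi_snd, oj_snd, ol_fst, ol_snd, oone_fst, oone_snd, omul,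
        Quaternion.re_mul, Quaternion.imI_mul, Quaternion.imJ_mul, Quaternion.imK_mul]

lemma octBasis_6' (hk : 6 < 8) : octBasis ⟨6, hk⟩ = ((⟨0,0,-2⁻¹,-2⁻¹⟩ : ℍ[ℝ]), (⟨2⁻¹,-2⁻¹,0,0⟩ : ℍ[ℝ])) := octBasis_6

lemma octBasis_7 : octBasis 7 = ((⟨-2⁻¹,0,0,0⟩ : ℍ[ℝ]), (⟨-2⁻¹,2⁻¹,2⁻¹,0⟩ : ℍ[ℝ])) := by
  have h : octBasis 7 = (2⁻¹ : ℝ) • (-oone + e1 - e4 + e6) := rfl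
  rw [h]
  refine Prod.ext ?_ ?_ <;>
  · ext <;>
      simp [e0, e1, e2, e3, e4, e5, e6, oi_fst_re, oi_fst_imI, oi_fst_imJ, oi_fst_imK, oj_fst_re, oj_fst_imI,
          oj_fst_imJ, oj_fst_imK, oi_snd, oj_snd, ol_fst, ol_snd, oone_fst, oone_snd, omul,
        Quaternion.re_mul, Quaternion.imI_mul, Quaternion.imJ_mul, Quaternion.imK_mul]

lemma octBasis_7' (hk : 7 < 8) : octBasis ⟨7, hk⟩ = ((⟨-2⁻¹,0,0,0⟩ : ℍ[ℝ]), (⟨-2⁻¹,2⁻¹,2⁻¹,0⟩ : ℍ[ℝ])) := octBasis_7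


set_option maxHeartbeats 2000000 in
lemma gram (i j : Fin 8) : oinner (octBasis i) (octBasis j) = (gMat i j : ℝ) := by
  fin_cases i <;> fin_cases j <;> rw [oinner_expand] <;>
    norm_num [octBasis_0, octBasis_1, octBasis_2, octBasis_3, octBasis_4, octBasis_5,
      octBasis_6, octBasis_7, octBasis_0', octBasis_1', octBasis_2', octBasis_3', octBasis_4',
      octBasis_5', octBasis_6', octBasis_7', oinner_expand, gMat]

/-- The inner product is integral on the octavian integers. -/
lemma oinner_int {x y : Oct} (hx : x ∈ OctInt) (hy : y ∈ OctInt) :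
    ∃ k : ℤ, oinner x y = (k : ℝ) := by
  induction hx, hy using Submodule.span_induction₂ with
  | mem_mem u v hu hv =>
    obtain ⟨i, rfl⟩ := hu
    obtain ⟨j, rfl⟩ := hv
    exact ⟨gMat i j, gram i j⟩
  | zero_left v hv => exact ⟨0, by rw [oinner_comm, oinner_zero_right]; norm_num⟩
  | zero_right u hu => exact ⟨0, by rw [oinner_zero_right]; norm_num⟩
  | add_left u v w hu hv hw h1 h2 =>
    obtain ⟨k1, e1⟩ := h1; obtain ⟨k2, e2⟩ := h2
    exact ⟨k1 + k2, by rw [oinner_add_left, e1, e2]; push_cast; ring⟩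
  | add_right u v w hu hv hw h1 h2 =>
    obtain ⟨k1, e1⟩ := h1; obtain ⟨k2, e2⟩ := h2
    exact ⟨k1 + k2, by rw [oinner_add_right, e1, e2]; push_cast; ring⟩
  | smul_left n u v hu hv h =>
    obtain ⟨k, e⟩ := h
    exact ⟨n * k, by rw [oinner_zsmul_left, e]; push_cast; ring⟩
  | smul_right n u v hu hv h =>
    obtain ⟨k, e⟩ := h
    exact ⟨n * k, by rw [oinner_comm, oinner_zsmul_left, oinner_comm, e]; push_cast; ring⟩

/-- The norm is integral on the octavian integers. -/
lemma oN_int {x : Oct} (hx : x ∈ OctInt) : ∃ k : ℤ, oN x = (k : ℝ) := by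
  induction hx using Submodule.span_induction with
  | mem u hu =>
    obtain ⟨i, rfl⟩ := hu
    refine ⟨1, ?_⟩
    have h := gram i i
    rw [oinner_self] at h
    have : (gMat i i : ℝ) = 2 := by fin_cases i <;> norm_num [gMat]
    rw [this] at h; push_cast; linarith
  | zero => exact ⟨0, by simp [oN_expand]⟩
  | add u v hu hv h1 h2 =>
    obtain ⟨k1, e1⟩ := h1; obtain ⟨k2, e2⟩ := h2
    obtain ⟨k3, e3⟩ := oinner_int hu hv
    exact ⟨k1 + k2 + k3, by rw [oN_add, e1, e2, e3]; push_cast; ring⟩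
  | smul n u hu h =>
    obtain ⟨k, e⟩ := h
    refine ⟨n^2 * k, ?_⟩
    have h2 : oinner (n • u) (n • u) = n * (n * oinner u u) := by
      rw [oinner_zsmul_left, oinner_comm, oinner_zsmul_left, oinner_comm]
    have h3 := oinner_self (n • u)
    have h4 := oinner_self u
    push_cast
    nlinarith [h2, h3, h4, e]

/-- Key bilinear identity used for the forward duality direction. -/
lemma key_identity (a b c a' b' c' : Oct) :
    oinner a a' + oinner b b' + oinner c c' =
      oinner (a + b + c) (a' + b' + c') - oinner (a + b) (b' + c')
        - oinner (b + c) (a' + b') + 2 * oinner b b' := by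
  simp only [oinner_expand, Prod.fst_add, Prod.snd_add,
    Quaternion.re_add, Quaternion.imI_add, Quaternion.imJ_add, Quaternion.imK_add]
  ring

lemma oinner3_eq (p q : Oct × Oct × Oct) :
    oinner3 p q = oinner p.1 q.1 + oinner p.2.1 q.2.1 + oinner p.2.2 q.2.2 := by
  simp only [oinner3, oN3, oinner, Prod.fst_add, Prod.snd_add]
  ring

lemma oN3_eq (p : Oct × Oct × Oct) : oinner3 p p = 2 * oN3 p := by
  simp only [oinner3_eq, oN3, oinner_self]; ring

/-! ### The half-integer coordinate lattice and discreteness -/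

/-- Half-integers. -/
def halfℤ : AddSubgroup ℝ := AddSubgroup.zmultiples (2⁻¹ : ℝ)

lemma halfℤ_bound {r : ℝ} (hr : r ∈ halfℤ) (h0 : r ≠ 0) : 2⁻¹ ≤ |r| := by
  obtain ⟨k, hk⟩ := hr
  have hr' : (k : ℝ) * 2⁻¹ = r := by
    rw [← hk]; simp [zsmul_eq_mul]
  have hk0 : k ≠ 0 := by
    rintro rfl; apply h0; rw [← hr']; norm_num
  have h1 : (1 : ℝ) ≤ |(k : ℝ)| := by
    rw [← Int.cast_abs]
    exact_mod_cast Int.one_le_abs hk0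
  rw [← hr', abs_mul, abs_of_pos (by norm_num : (0:ℝ) < 2⁻¹)]
  nlinarith

/-- The lattice of octonions all of whose coordinates are half-integers. -/
def halfM : Submodule ℤ Oct where
  carrier := {x | x.1.re ∈ halfℤ ∧ x.1.imI ∈ halfℤ ∧ x.1.imJ ∈ halfℤ ∧ x.1.imK ∈ halfℤ ∧
    x.2.re ∈ halfℤ ∧ x.2.imI ∈ halfℤ ∧ x.2.imJ ∈ halfℤ ∧ x.2.imK ∈ halfℤ}
  add_mem' := by
    rintro x y ⟨h1, h2, h3, h4, h5, h6, h7, h8⟩ ⟨g1, g2, g3, g4, g5, g6, g7, g8⟩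
    exact ⟨AddSubgroup.add_mem _ h1 g1, AddSubgroup.add_mem _ h2 g2,
      AddSubgroup.add_mem _ h3 g3, AddSubgroup.add_mem _ h4 g4,
      AddSubgroup.add_mem _ h5 g5, AddSubgroup.add_mem _ h6 g6,
      AddSubgroup.add_mem _ h7 g7, AddSubgroup.add_mem _ h8 g8⟩
  zero_mem' := by
    have h : (0 : ℝ) ∈ halfℤ := zero_mem _
    refine ⟨?_, ?_, ?_, ?_, ?_, ?_, ?_, ?_⟩ <;> simpa using h
  smul_mem' := by
    rintro n x ⟨h1, h2, h3, h4, h5, h6, h7, h8⟩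
    rw [Set.mem_setOf_eq, Prod.smul_fst, Prod.smul_snd]
    simp only [Quaternion.re_smul, Quaternion.imI_smul, Quaternion.imJ_smul,
      Quaternion.imK_smul]
    exact ⟨AddSubgroup.zsmul_mem _ h1 n, AddSubgroup.zsmul_mem _ h2 n,
      AddSubgroup.zsmul_mem _ h3 n, AddSubgroup.zsmul_mem _ h4 n,
      AddSubgroup.zsmul_mem _ h5 n, AddSubgroup.zsmul_mem _ h6 n,
      AddSubgroup.zsmul_mem _ h7 n, AddSubgroup.zsmul_mem _ h8 n⟩

lemma octInt_le_halfM : OctInt ≤ halfM := by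
  rw [OctInt, Submodule.span_le]
  rintro x ⟨i, rfl⟩
  have half_mem : (2⁻¹ : ℝ) ∈ halfℤ := ⟨1, by simp⟩
  have nhalf_mem : (-2⁻¹ : ℝ) ∈ halfℤ := ⟨-1, by simp⟩
  have zero_mem : (0 : ℝ) ∈ halfℤ := ⟨0, by simp⟩
  fin_cases i <;>
    simp only [octBasis_0, octBasis_1, octBasis_2, octBasis_3, octBasis_4, octBasis_5,
      octBasis_6, octBasis_7, octBasis_0', octBasis_1', octBasis_2', octBasis_3', octBasis_4',
      octBasis_5', octBasis_6', octBasis_7'] <;>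
    exact ⟨by assumption, by assumption, by assumption, by assumption,
      by assumption, by assumption, by assumption, by assumption⟩

lemma abs_coord_le_norm (q : ℍ[ℝ]) :
    |q.re| ≤ ‖q‖ ∧ |q.imI| ≤ ‖q‖ ∧ |q.imJ| ≤ ‖q‖ ∧ |q.imK| ≤ ‖q‖ := by
  have hn : ‖q‖ * ‖q‖ = Quaternion.normSq q := (Quaternion.normSq_eq_norm_mul_self q).symm
  have h0 : (0:ℝ) ≤ ‖q‖ := norm_nonneg q
  rw [Quaternion.normSq_def'] at hn
  have hn' : ‖q‖^2 = q.re ^ 2 + q.imI ^ 2 + q.imJ ^ 2 + q.imK ^ 2 := by rw [sq]; exact hn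
  have habs : ∀ t : ℝ, t^2 ≤ ‖q‖^2 → |t| ≤ ‖q‖ := by
    intro t ht
    calc |t| = Real.sqrt (t^2) := (Real.sqrt_sq_eq_abs t).symm
    _ ≤ Real.sqrt (‖q‖^2) := Real.sqrt_le_sqrt ht
    _ = ‖q‖ := Real.sqrt_sq h0
  exact ⟨habs _ (by nlinarith [sq_nonneg q.imI, sq_nonneg q.imJ, sq_nonneg q.imK]),
    habs _ (by nlinarith [sq_nonneg q.re, sq_nonneg q.imJ, sq_nonneg q.imK]),
    habs _ (by nlinarith [sq_nonneg q.re, sq_nonneg q.imI, sq_nonneg q.imK]),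
    habs _ (by nlinarith [sq_nonneg q.re, sq_nonneg q.imI, sq_nonneg q.imJ])⟩

/-- Distinct octavian integers are at distance at least `1/2`. -/
lemma octInt_dist {x y : Oct} (hx : x ∈ OctInt) (hy : y ∈ OctInt) (hne : x ≠ y) :
    2⁻¹ ≤ dist x y := by
  have hd : x - y ∈ halfM := octInt_le_halfM (Submodule.sub_mem _ hx hy)
  have hne' : x - y ≠ 0 := sub_ne_zero_of_ne hne
  obtain ⟨h1, h2, h3, h4, h5, h6, h7, h8⟩ := hd
  have hdist : dist x y = max ‖x.1 - y.1‖ ‖x.2 - y.2‖ := by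
    rw [Prod.dist_eq, dist_eq_norm, dist_eq_norm]
  -- some coordinate of x - y is nonzero
  have key : 2⁻¹ ≤ ‖x.1 - y.1‖ ∨ 2⁻¹ ≤ ‖x.2 - y.2‖ := by
    by_contra hcon
    push_neg at hcon
    obtain ⟨c1, c2⟩ := hcon
    apply hne'
    have z1 : x.1 - y.1 = 0 := by
      have hb := abs_coord_le_norm (x.1 - y.1)
      have e1 : (x - y).1 = x.1 - y.1 := rfl
      rw [e1] at h1 h2 h3 h4
      ext
      · rcases eq_or_ne (x.1 - y.1).re 0 with h | h
        · simpa using h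
        · exact absurd (le_trans (halfℤ_bound h1 h) hb.1) (by push_neg; linarith)
      · rcases eq_or_ne (x.1 - y.1).imI 0 with h | h
        · simpa using h
        · exact absurd (le_trans (halfℤ_bound h2 h) hb.2.1) (by push_neg; linarith)
      · rcases eq_or_ne (x.1 - y.1).imJ 0 with h | h
        · simpa using h
        · exact absurd (le_trans (halfℤ_bound h3 h) hb.2.2.1) (by push_neg; linarith)
      · rcases eq_or_ne (x.1 - y.1).imK 0 with h | h
        · simpa using h
        · exact absurd (le_trans (halfℤ_bound h4 h) hb.2.2.2) (by push_neg; linarith)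
    have z2 : x.2 - y.2 = 0 := by
      have hb := abs_coord_le_norm (x.2 - y.2)
      have e1 : (x - y).2 = x.2 - y.2 := rfl
      rw [e1] at h5 h6 h7 h8
      ext
      · rcases eq_or_ne (x.2 - y.2).re 0 with h | h
        · simpa using h
        · exact absurd (le_trans (halfℤ_bound h5 h) hb.1) (by push_neg; linarith)
      · rcases eq_or_ne (x.2 - y.2).imI 0 with h | h
        · simpa using h
        · exact absurd (le_trans (halfℤ_bound h6 h) hb.2.1) (by push_neg; linarith)
      · rcases eq_or_ne (x.2 - y.2).imJ 0 with h | h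
        · simpa using h
        · exact absurd (le_trans (halfℤ_bound h7 h) hb.2.2.1) (by push_neg; linarith)
      · rcases eq_or_ne (x.2 - y.2).imK 0 with h | h
        · simpa using h
        · exact absurd (le_trans (halfℤ_bound h8 h) hb.2.2.2) (by push_neg; linarith)
    exact Prod.ext (by rw [Prod.fst_sub]; exact z1) (by rw [Prod.snd_sub]; exact z2)
  rw [hdist]
  rcases key with h | h
  · exact le_trans h (le_max_left _ _)
  · exact le_trans h (le_max_right _ _)


/-- Given two `E₈` sublattices `Φ, Ψ` of `O` with `Φ + Ψ = O` and `Φ ∩ Ψ = 2O`,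
the lattice `Λ(Φ,Ψ) = {(a,b,c) ∈ O³ : a+b, b+c, a+c ∈ Φ, a+b+c ∈ Ψ}` is an even
unimodular full-rank lattice in `𝕆³ ≅ ℝ²⁴` (w.r.t. `½⟨x,y⟩`) with no vector of
norm `2`: it is a Leech lattice. -/
theorem LambdaPhiPsi_is_Leech (Φ Ψ : AddSubgroup Oct)
    (hΦO : (Φ : Set Oct) ⊆ (OctInt : Set Oct)) (hΨO : (Ψ : Set Oct) ⊆ (OctInt : Set Oct))
    (hΦ : DiscreteTopology Φ ∧ Submodule.span ℝ (Φ : Set Oct) = ⊤ ∧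
      (∀ v ∈ Φ, ∃ k : ℤ, oinner v v / 2 = 2 * (k : ℝ)) ∧
      (∀ v : Oct, v ∈ Φ ↔ ∀ w ∈ Φ, ∃ k : ℤ, oinner v w / 2 = (k : ℝ)))
    (hΨ : DiscreteTopology Ψ ∧ Submodule.span ℝ (Ψ : Set Oct) = ⊤ ∧
      (∀ v ∈ Ψ, ∃ k : ℤ, oinner v v / 2 = 2 * (k : ℝ)) ∧
      (∀ v : Oct, v ∈ Ψ ↔ ∀ w ∈ Ψ, ∃ k : ℤ, oinner v w / 2 = (k : ℝ)))
    (hsum : Φ ⊔ Ψ = (OctInt : Submodule ℤ Oct).toAddSubgroup)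
    (hint : ((Φ ⊓ Ψ : AddSubgroup Oct) : Set Oct) = twoO)
    (L : Set (Oct × Oct × Oct))
    (hL : L = {p : Oct × Oct × Oct | p.1 ∈ OctInt ∧ p.2.1 ∈ OctInt ∧ p.2.2 ∈ OctInt ∧
      p.1 + p.2.1 ∈ Φ ∧ p.2.1 + p.2.2 ∈ Φ ∧ p.1 + p.2.2 ∈ Φ ∧
      p.1 + p.2.1 + p.2.2 ∈ Ψ}) :
    DiscreteTopology L ∧ Submodule.span ℝ L = ⊤ ∧
      (∀ v ∈ L, ∃ k : ℤ, oinner3 v v / 2 = 2 * (k : ℝ)) ∧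
      (∀ v : Oct × Oct × Oct, v ∈ L ↔ ∀ w ∈ L, ∃ k : ℤ, oinner3 v w / 2 = (k : ℝ)) ∧
      (∀ v ∈ L, oinner3 v v / 2 ≠ 2) := by
  obtain ⟨hΦdisc, hΦspan, hΦeven, hΦdual⟩ := hΦ
  obtain ⟨hΨdisc, hΨspan, hΨeven, hΨdual⟩ := hΨ
  -- membership of `2O` in `Φ` and `Ψ`
  have h2O : ∀ x ∈ OctInt, x + x ∈ Φ ∧ x + x ∈ Ψ := by
    intro x hx
    have hm : x + x ∈ ((Φ ⊓ Ψ : AddSubgroup Oct) : Set Oct) := by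
      rw [hint]; exact ⟨x, hx, rfl⟩
    exact AddSubgroup.mem_inf.mp hm
  have hΦΨ2O : ∀ x : Oct, x ∈ Φ → x ∈ Ψ → ∃ u ∈ OctInt, u + u = x := by
    intro x h1 h2
    have hm : x ∈ ((Φ ⊓ Ψ : AddSubgroup Oct) : Set Oct) := AddSubgroup.mem_inf.mpr ⟨h1, h2⟩
    rw [hint] at hm
    obtain ⟨u, hu, he⟩ := hm
    exact ⟨u, hu, he⟩
  -- norms of nonzero `Φ`-vectors are even
  have hΦnorm : ∀ x ∈ Φ, ∃ k : ℤ, oN x = 2 * (k : ℝ) := by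
    intro x hx
    obtain ⟨k, e⟩ := hΦeven x hx
    rw [oinner_self] at e
    exact ⟨k, by linarith⟩
  have hΦΨnorm_ne_two : ∀ x : Oct, x ∈ Φ → x ∈ Ψ → oN x ≠ 2 := by
    intro x h1 h2 hN
    obtain ⟨u, hu, he⟩ := hΦΨ2O x h1 h2
    obtain ⟨k, ek⟩ := oN_int hu
    have h4 : oN x = 4 * oN u := by
      rw [← he, oN_add, oinner_self]; ring
    rw [hN, ek] at h4
    have : (2 : ℤ) = 4 * k := by exact_mod_cast h4
    omega
  have hΦnorm_ne_one : ∀ x ∈ Φ, oN x ≠ 1 := by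
    intro x hx hN
    obtain ⟨k, e⟩ := hΦnorm x hx
    rw [hN] at e
    have : (1 : ℤ) = 2 * k := by exact_mod_cast e
    omega
  subst hL
  set Lset : Set (Oct × Oct × Oct) := {p : Oct × Oct × Oct | p.1 ∈ OctInt ∧ p.2.1 ∈ OctInt ∧
      p.2.2 ∈ OctInt ∧ p.1 + p.2.1 ∈ Φ ∧ p.2.1 + p.2.2 ∈ Φ ∧ p.1 + p.2.2 ∈ Φ ∧
      p.1 + p.2.1 + p.2.2 ∈ Ψ} with hLset
  -- generator memberships
  have memΦ1 : ∀ x ∈ Φ, ((x, x, (0:Oct)) : Oct × Oct × Oct) ∈ Lset := by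
    intro x hx
    refine ⟨hΦO hx, hΦO hx, Submodule.zero_mem _, add_mem hx hx, ?_, ?_, ?_⟩
    · simpa using hx
    · simpa using hx
    · simpa using (h2O x (hΦO hx)).2
  have memΦ2 : ∀ x ∈ Φ, ((x, (0:Oct), x) : Oct × Oct × Oct) ∈ Lset := by
    intro x hx
    refine ⟨hΦO hx, Submodule.zero_mem _, hΦO hx, ?_, ?_, add_mem hx hx, ?_⟩
    · simpa using hx
    · simpa using hx
    · simpa using (h2O x (hΦO hx)).2
  have memΦ3 : ∀ x ∈ Φ, (((0:Oct), x, x) : Oct × Oct × Oct) ∈ Lset := by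
    intro x hx
    refine ⟨Submodule.zero_mem _, hΦO hx, hΦO hx, ?_, add_mem hx hx, ?_, ?_⟩
    · simpa using hx
    · simpa using hx
    · simpa using (h2O x (hΦO hx)).2
  have memΨ : ∀ y ∈ Ψ, ((y, y, y) : Oct × Oct × Oct) ∈ Lset := by
    intro y hy
    refine ⟨hΨO hy, hΨO hy, hΨO hy, (h2O y (hΨO hy)).1, (h2O y (hΨO hy)).1,
      (h2O y (hΨO hy)).1, add_mem (h2O y (hΨO hy)).2 hy⟩
  refine ⟨?_, ?_, ?_, ?_, ?_⟩
  -- 1. discreteness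
  · have sep : ∀ p q : Oct × Oct × Oct, p ∈ Lset → q ∈ Lset → p ≠ q → 2⁻¹ ≤ dist p q := by
      intro p q hp hq hne
      obtain ⟨hp1, hp2, hp3, -⟩ := hp
      obtain ⟨hq1, hq2, hq3, -⟩ := hq
      have hd : dist p q = max (dist p.1 q.1) (max (dist p.2.1 q.2.1) (dist p.2.2 q.2.2)) := by
        rw [Prod.dist_eq (x := p) (y := q), Prod.dist_eq (x := p.2) (y := q.2)]
      have hcomp : p.1 ≠ q.1 ∨ p.2.1 ≠ q.2.1 ∨ p.2.2 ≠ q.2.2 := by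
        by_contra hno
        push_neg at hno
        exact hne (Prod.ext hno.1 (Prod.ext hno.2.1 hno.2.2))
      rw [hd]
      rcases hcomp with h | h | h
      · exact le_trans (octInt_dist hp1 hq1 h) (le_max_left _ _)
      · exact le_trans (octInt_dist hp2 hq2 h) (le_trans (le_max_left _ _) (le_max_right _ _))
      · exact le_trans (octInt_dist hp3 hq3 h) (le_trans (le_max_right _ _) (le_max_right _ _))
    refine discreteTopology_iff_isOpen_singleton.mpr fun a => ?_
    rw [Metric.isOpen_singleton_iff]
    refine ⟨2⁻¹, by norm_num, fun b hb => ?_⟩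
    by_contra hbne
    have hvne : (b : Oct × Oct × Oct) ≠ (a : Oct × Oct × Oct) := fun h => hbne (Subtype.ext h)
    have := sep _ _ b.2 a.2 hvne
    rw [Subtype.dist_eq] at hb
    linarith
  -- 2. full rank
  · set f1 : Oct →ₗ[ℝ] Oct × Oct × Oct :=
      (LinearMap.inl ℝ Oct (Oct × Oct)).comp ((2:ℝ) • LinearMap.id) with hf1
    set f2 : Oct →ₗ[ℝ] Oct × Oct × Oct :=
      ((LinearMap.inr ℝ Oct (Oct × Oct)).comp ((LinearMap.inl ℝ Oct Oct).comp
        ((2:ℝ) • LinearMap.id))) with hf2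
    set f3 : Oct →ₗ[ℝ] Oct × Oct × Oct :=
      ((LinearMap.inr ℝ Oct (Oct × Oct)).comp ((LinearMap.inr ℝ Oct Oct).comp
        ((2:ℝ) • LinearMap.id))) with hf3
    have him1 : ∀ x ∈ Φ, f1 x ∈ Lset := by
      intro x hx
      have he : f1 x = ((x + x, 0, 0) : Oct × Oct × Oct) := by
        simp [hf1, two_smul]; rfl
      rw [he]
      refine ⟨add_mem (hΦO hx) (hΦO hx), Submodule.zero_mem _, Submodule.zero_mem _,
        ?_, ?_, ?_, ?_⟩
      · simpa using add_mem hx hx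
      · simpa using (zero_mem Φ)
      · simpa using add_mem hx hx
      · simpa using (h2O x (hΦO hx)).2
    have him2 : ∀ x ∈ Φ, f2 x ∈ Lset := by
      intro x hx
      have he : f2 x = ((0, x + x, 0) : Oct × Oct × Oct) := by
        simp [hf2, two_smul]
      rw [he]
      refine ⟨Submodule.zero_mem _, add_mem (hΦO hx) (hΦO hx), Submodule.zero_mem _,
        ?_, ?_, ?_, ?_⟩
      · simpa using add_mem hx hx
      · simpa using add_mem hx hx
      · simpa using (zero_mem Φ)
      · simpa using (h2O x (hΦO hx)).2
    have him3 : ∀ x ∈ Φ, f3 x ∈ Lset := by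
      intro x hx
      have he : f3 x = ((0, 0, x + x) : Oct × Oct × Oct) := by
        simp [hf3, two_smul]
      rw [he]
      refine ⟨Submodule.zero_mem _, Submodule.zero_mem _, add_mem (hΦO hx) (hΦO hx),
        ?_, ?_, ?_, ?_⟩
      · simpa using (zero_mem Φ)
      · simpa using add_mem hx hx
      · simpa using add_mem hx hx
      · simpa using (h2O x (hΦO hx)).2
    have hr1 : LinearMap.range f1 ≤ Submodule.span ℝ Lset := by
      rw [LinearMap.range_eq_map, ← hΦspan, Submodule.map_span]
      apply Submodule.span_le.mpr
      rintro _ ⟨x, hx, rfl⟩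
      exact Submodule.subset_span (him1 x hx)
    have hr2 : LinearMap.range f2 ≤ Submodule.span ℝ Lset := by
      rw [LinearMap.range_eq_map, ← hΦspan, Submodule.map_span]
      apply Submodule.span_le.mpr
      rintro _ ⟨x, hx, rfl⟩
      exact Submodule.subset_span (him2 x hx)
    have hr3 : LinearMap.range f3 ≤ Submodule.span ℝ Lset := by
      rw [LinearMap.range_eq_map, ← hΦspan, Submodule.map_span]
      apply Submodule.span_le.mpr
      rintro _ ⟨x, hx, rfl⟩
      exact Submodule.subset_span (him3 x hx)
    rw [eq_top_iff]
    rintro p -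
    have hp : p = f1 ((2⁻¹:ℝ) • p.1) + f2 ((2⁻¹:ℝ) • p.2.1) + f3 ((2⁻¹:ℝ) • p.2.2) := by
      refine Prod.ext ?_ (Prod.ext ?_ ?_) <;>
        simp [hf1, hf2, hf3, smul_smul] <;> norm_num
    rw [hp]
    exact add_mem (add_mem (hr1 ⟨_, rfl⟩) (hr2 ⟨_, rfl⟩)) (hr3 ⟨_, rfl⟩)
  -- 3. evenness
  · rintro v ⟨ha, hb, hc, hab, hbc, hac, habc⟩
    obtain ⟨kab, ekab⟩ := hΦeven _ hab
    obtain ⟨kbc, ekbc⟩ := hΦeven _ hbc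
    obtain ⟨kac, ekac⟩ := hΦeven _ hac
    obtain ⟨ks, eks⟩ := hΨeven _ habc
    rw [oinner_self] at ekab ekbc ekac eks
    have e1 : oN (v.1 + v.2.1) = oN v.1 + oN v.2.1 + oinner v.1 v.2.1 := oN_add _ _
    have e2 : oN (v.2.1 + v.2.2) = oN v.2.1 + oN v.2.2 + oinner v.2.1 v.2.2 := oN_add _ _
    have e3 : oN (v.1 + v.2.2) = oN v.1 + oN v.2.2 + oinner v.1 v.2.2 := oN_add _ _
    have e4 : oN (v.1 + v.2.1 + v.2.2) = oN (v.1 + v.2.1) + oN v.2.2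
        + (oinner v.1 v.2.2 + oinner v.2.1 v.2.2) := by
      rw [oN_add, oinner_add_left]
    have e5 : oinner3 v v = 2 * (oN v.1 + oN v.2.1 + oN v.2.2) := by
      rw [oN3_eq]; rfl
    exact ⟨kab + kbc + kac - ks, by rw [e5]; push_cast; linarith⟩
  -- 4. unimodularity
  · intro v
    constructor
    · rintro ⟨ha, hb, hc, hab, hbc, hac, habc⟩ w ⟨ha', hb', hc', hab', hbc', hac', habc'⟩
      obtain ⟨k1, e1⟩ := (hΨdual _).mp habc _ habc'
      obtain ⟨k2, e2⟩ := (hΦdual _).mp hab _ hbc'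
      obtain ⟨k3, e3⟩ := (hΦdual _).mp hbc _ hab'
      obtain ⟨k4, e4⟩ := oinner_int hb hb'
      have KI := key_identity v.1 v.2.1 v.2.2 w.1 w.2.1 w.2.2
      refine ⟨k1 - k2 - k3 + k4, ?_⟩
      rw [oinner3_eq]
      push_cast
      linarith
    · intro H
      have hab : v.1 + v.2.1 ∈ Φ := by
        refine (hΦdual _).mpr fun x hx => ?_
        obtain ⟨k, e⟩ := H _ (memΦ1 x hx)
        rw [oinner3_eq] at e
        refine ⟨k, ?_⟩
        rw [oinner_add_left]
        simp only [oinner_zero_right] at e ⊢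
        simpa using e
      have hac : v.1 + v.2.2 ∈ Φ := by
        refine (hΦdual _).mpr fun x hx => ?_
        obtain ⟨k, e⟩ := H _ (memΦ2 x hx)
        rw [oinner3_eq] at e
        refine ⟨k, ?_⟩
        rw [oinner_add_left]
        simp only [oinner_zero_right] at e ⊢
        simpa using e
      have hbc : v.2.1 + v.2.2 ∈ Φ := by
        refine (hΦdual _).mpr fun x hx => ?_
        obtain ⟨k, e⟩ := H _ (memΦ3 x hx)
        rw [oinner3_eq] at e
        refine ⟨k, ?_⟩
        rw [oinner_add_left]
        simp only [oinner_zero_right] at e ⊢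
        simpa using e
      have habc : v.1 + v.2.1 + v.2.2 ∈ Ψ := by
        refine (hΨdual _).mpr fun y hy => ?_
        obtain ⟨k, e⟩ := H _ (memΨ y hy)
        rw [oinner3_eq] at e
        refine ⟨k, ?_⟩
        rw [oinner_add_left, oinner_add_left]
        simpa using e
      have ea : v.1 = (v.1 + v.2.1) + (v.1 + v.2.2) - (v.1 + v.2.1 + v.2.2) := by abel
      have eb : v.2.1 = (v.1 + v.2.1) + (v.2.1 + v.2.2) - (v.1 + v.2.1 + v.2.2) := by abel
      have ec : v.2.2 = (v.1 + v.2.2) + (v.2.1 + v.2.2) - (v.1 + v.2.1 + v.2.2) := by abel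
      refine ⟨?_, ?_, ?_, hab, hbc, hac, habc⟩
      · rw [ea]
        exact Submodule.sub_mem _ (Submodule.add_mem _ (hΦO hab) (hΦO hac)) (hΨO habc)
      · rw [eb]
        exact Submodule.sub_mem _ (Submodule.add_mem _ (hΦO hab) (hΦO hbc)) (hΨO habc)
      · rw [ec]
        exact Submodule.sub_mem _ (Submodule.add_mem _ (hΦO hac) (hΦO hbc)) (hΨO habc)
  -- 5. no vectors of norm 2
  · rintro v ⟨ha, hb, hc, hab, hbc, hac, habc⟩ hN2
    have hNv : oN v.1 + oN v.2.1 + oN v.2.2 = 2 := by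
      have e5 : oinner3 v v = 2 * (oN v.1 + oN v.2.1 + oN v.2.2) := by
        rw [oN3_eq]; rfl
      rw [e5] at hN2
      linarith
    obtain ⟨na, ena⟩ := oN_int ha
    obtain ⟨nb, enb⟩ := oN_int hb
    obtain ⟨nc, enc⟩ := oN_int hc
    have hna0 : 0 ≤ na := by exact_mod_cast ena ▸ oN_nonneg v.1
    have hnb0 : 0 ≤ nb := by exact_mod_cast enb ▸ oN_nonneg v.2.1
    have hnc0 : 0 ≤ nc := by exact_mod_cast enc ▸ oN_nonneg v.2.2
    have hsum2 : na + nb + nc = 2 := by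
      have : ((na + nb + nc : ℤ) : ℝ) = 2 := by push_cast; rw [← ena, ← enb, ← enc]; linarith
      exact_mod_cast this
    have hzero : ∀ x : Oct, ∀ n : ℤ, oN x = (n : ℝ) → n = 0 → x = 0 := by
      intro x n hx hn
      exact oN_eq_zero (by rw [hx, hn]; norm_num)
    have hcases : (na = 2 ∧ nb = 0 ∧ nc = 0) ∨ (na = 0 ∧ nb = 2 ∧ nc = 0) ∨
        (na = 0 ∧ nb = 0 ∧ nc = 2) ∨ (na = 1 ∧ nb = 1 ∧ nc = 0) ∨
        (na = 1 ∧ nb = 0 ∧ nc = 1) ∨ (na = 0 ∧ nb = 1 ∧ nc = 1) := by omega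
    rcases hcases with ⟨h1, h2, h3⟩ | ⟨h1, h2, h3⟩ | ⟨h1, h2, h3⟩ | ⟨h1, h2, h3⟩ |
      ⟨h1, h2, h3⟩ | ⟨h1, h2, h3⟩
    · have hb0 := hzero _ _ enb h2
      have hc0 := hzero _ _ enc h3
      rw [hb0, add_zero] at hab
      rw [hb0, hc0, add_zero, add_zero] at habc
      exact hΦΨnorm_ne_two _ hab habc (by rw [ena, h1]; norm_num)
    · have ha0 := hzero _ _ ena h1
      have hc0 := hzero _ _ enc h3
      rw [ha0, zero_add] at hab
      rw [ha0, hc0, zero_add, add_zero] at habc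
      exact hΦΨnorm_ne_two _ hab habc (by rw [enb, h2]; norm_num)
    · have ha0 := hzero _ _ ena h1
      have hb0 := hzero _ _ enb h2
      rw [hb0, zero_add] at hbc
      rw [ha0, hb0, zero_add, zero_add] at habc
      exact hΦΨnorm_ne_two _ hbc habc (by rw [enc, h3]; norm_num)
    · have hc0 := hzero _ _ enc h3
      rw [hc0, add_zero] at hac
      exact hΦnorm_ne_one _ hac (by rw [ena, h1]; norm_num)
    · have hb0 := hzero _ _ enb h2
      rw [hb0, add_zero] at hab
      exact hΦnorm_ne_one _ hab (by rw [ena, h1]; norm_num)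
    · have ha0 := hzero _ _ ena h1
      rw [ha0, zero_add] at hab
      exact hΦnorm_ne_one _ hab (by rw [enb, h2]; norm_num)

end Octonion
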